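/- Let V^{i,j} (for i, j ≥ 0; set V^{i,j} = 0 if i < 0 or j < 0) be ℂ-vector spaces with linear maps D₁ : V^{i,j} → V^{i+1,j}, D₂ : V^{i,j} → V^{i,j+1} satisfying D₁² = 0, D₂² = 0, D₁D₂ + D₂D₁ = 0; linear maps h₁ : V^{i,j} → V^{i−1,j} with D₁h₁ + h₁D₁ equal to multiplication by j on V^{i,j}; linear maps h₂ : V^{i,j} → V^{i,j−1} with D₂h₂ + h₂D₂ equal to multiplication by i on V^{i,j}; and linear isomorphisms σ : V^{i,j} → V^{j,i} with σ ∘ σ = id and σ ∘ D₁ = D₂ ∘ σ on every V^{i,j}. Fix an integer p ≥ 1. Let K^q = ker(D₁ : V^{p,q} → V^{p+1,q}); then D₂ restricts to maps K^q → K^{q+1}, giving a complex (K^•, D₂). Let T^• be the complex with T^0 = ker(D₂ : V^{0,p} → V^{0,p+1}), T^m = V^{0,p+m−1} for m ≥ 1, whose differential T^0 → T^1 is the inclusion and whose differential T^m → T^{m+1} for m ≥ 1 is D₂. Then for every n ≥ 0 the n-th cohomology of (K^•, D₂) is isomorphic, as a ℂ-vector space, to the n-th cohomology of T^•. -/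

import Mathlib

/-- The cohomology (cocycles modulo coboundaries) attached to a submodule `Z` of cocycles
and a submodule `B` of coboundaries inside an ambient module `M`. -/
noncomputable abbrev cohomologyOf {M : Type*} [AddCommGroup M] [Module ℂ M]
    (Z B : Submodule ℂ M) : Type _ :=
  Z ⧸ Submodule.comap Z.subtype B

section Helpers

variable {M N : Type*} [AddCommGroup M] [Module ℂ M] [AddCommGroup N] [Module ℂ N]
variable (Z B : Submodule ℂ M) (Z' B' : Submodule ℂ N)

/-- A linear map sending cocycles to cocycles and (relevant) coboundaries to coboundaries
induces a map on `cohomologyOf`. -/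
noncomputable def cohMap (f : M →ₗ[ℂ] N)
    (hZ : ∀ x ∈ Z, f x ∈ Z') (hB : ∀ x ∈ Z, x ∈ B → f x ∈ B') :
    cohomologyOf Z B →ₗ[ℂ] cohomologyOf Z' B' :=
  Submodule.liftQ _ ((Submodule.comap Z'.subtype B').mkQ ∘ₗ
      LinearMap.codRestrict Z' (f ∘ₗ Z.subtype) fun z => hZ z.1 z.2)
    (by
      intro z hz
      simp only [LinearMap.mem_ker, LinearMap.comp_apply, Submodule.mkQ_apply,
        Submodule.Quotient.mk_eq_zero, Submodule.mem_comap]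
      exact hB z.1 z.2 hz)

lemma cohMap_mk (f : M →ₗ[ℂ] N) (hZ : ∀ x ∈ Z, f x ∈ Z')
    (hB : ∀ x ∈ Z, x ∈ B → f x ∈ B') (z : Z) :
    cohMap Z B Z' B' f hZ hB (Submodule.Quotient.mk z) =
      Submodule.Quotient.mk ⟨f z.1, hZ z.1 z.2⟩ := rfl

lemma cohMap_injective (f : M →ₗ[ℂ] N) (hZ : ∀ x ∈ Z, f x ∈ Z')
    (hB : ∀ x ∈ Z, x ∈ B → f x ∈ B')
    (h : ∀ x ∈ Z, f x ∈ B' → x ∈ B) :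
    Function.Injective (cohMap Z B Z' B' f hZ hB) := by
  rw [← LinearMap.ker_eq_bot]
  apply Submodule.ker_liftQ_eq_bot
  intro z hz
  simp only [LinearMap.mem_ker, LinearMap.comp_apply, Submodule.mkQ_apply,
    Submodule.Quotient.mk_eq_zero, Submodule.mem_comap] at hz ⊢
  exact h z.1 z.2 hz

lemma cohMap_surjective (f : M →ₗ[ℂ] N) (hZ : ∀ x ∈ Z, f x ∈ Z')
    (hB : ∀ x ∈ Z, x ∈ B → f x ∈ B')
    (h : ∀ y ∈ Z', ∃ x, ∃ _ : x ∈ Z, f x - y ∈ B') :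
    Function.Surjective (cohMap Z B Z' B' f hZ hB) := by
  intro q
  obtain ⟨z', rfl⟩ := Submodule.Quotient.mk_surjective _ q
  obtain ⟨x, hx, hfx⟩ := h z'.1 z'.2
  refine ⟨Submodule.Quotient.mk ⟨x, hx⟩, ?_⟩
  rw [cohMap_mk, Submodule.Quotient.eq]
  simpa using hfx

/-- Package the above into a linear equivalence of cohomologies. -/
noncomputable def cohEquiv (f : M →ₗ[ℂ] N)
    (hZ : ∀ x ∈ Z, f x ∈ Z') (hB : ∀ x ∈ Z, x ∈ B → f x ∈ B')
    (hinj : ∀ x ∈ Z, f x ∈ B' → x ∈ B)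
    (hsurj : ∀ y ∈ Z', ∃ x, ∃ _ : x ∈ Z, f x - y ∈ B') :
    cohomologyOf Z B ≃ₗ[ℂ] cohomologyOf Z' B' :=
  LinearEquiv.ofBijective (cohMap Z B Z' B' f hZ hB)
    ⟨cohMap_injective Z B Z' B' f hZ hB hinj, cohMap_surjective Z B Z' B' f hZ hB hsurj⟩

end Helpers

section Aux

variable {V : ℕ → ℕ → Type*}
    [∀ i j, AddCommGroup (V i j)] [∀ i j, Module ℂ (V i j)]
    {D₁ : ∀ i j, V i j →ₗ[ℂ] V (i + 1) j} {D₂ : ∀ i j, V i j →ₗ[ℂ] V i (j + 1)}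
    {h₁ : ∀ i j, V (i + 1) j →ₗ[ℂ] V i j} {h₂ : ∀ i j, V i (j + 1) →ₗ[ℂ] V i j}

/-- Transport along an equality of degrees in the zeroth column. -/
lemma coh_cast (N N' : ℕ) (h : N = N') {A : Type*} [AddCommGroup A] [Module ℂ A]
    (e : Nonempty (A ≃ₗ[ℂ] cohomologyOf (LinearMap.ker (D₂ 0 (N + 1)))
        (LinearMap.range (D₂ 0 N)))) :
    Nonempty (A ≃ₗ[ℂ] cohomologyOf (LinearMap.ker (D₂ 0 (N' + 1)))
        (LinearMap.range (D₂ 0 N'))) := by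
  subst h; exact e

/-- Dimension shift: the cohomology of the complex of `D₁`-closed elements of column
`a + 2` in degree `n + 2` agrees with that of column `a + 1` in degree `n + 3`. -/
lemma step_iso
    (hD₁ : ∀ i j (v : V i j), D₁ (i + 1) j (D₁ i j v) = 0)
    (hD₂ : ∀ i j (v : V i j), D₂ i (j + 1) (D₂ i j v) = 0)
    (hanti : ∀ i j (v : V i j), D₁ i (j + 1) (D₂ i j v) + D₂ (i + 1) j (D₁ i j v) = 0)
    (hh₁ : ∀ i j (v : V (i + 1) j),
      D₁ i j (h₁ i j v) + h₁ (i + 1) j (D₁ (i + 1) j v) = (j : ℂ) • v)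
    (hh₂ : ∀ i j (v : V i (j + 1)),
      D₂ i j (h₂ i j v) + h₂ i (j + 1) (D₂ i (j + 1) v) = (i : ℂ) • v)
    (a n : ℕ) :
    Nonempty
      (cohomologyOf (LinearMap.ker (D₁ (a + 2) (n + 2)) ⊓ LinearMap.ker (D₂ (a + 2) (n + 2)))
          (Submodule.map (D₂ (a + 2) (n + 1)) (LinearMap.ker (D₁ (a + 2) (n + 1)))) ≃ₗ[ℂ]
        cohomologyOf (LinearMap.ker (D₁ (a + 1) (n + 3)) ⊓ LinearMap.ker (D₂ (a + 1) (n + 3)))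
          (Submodule.map (D₂ (a + 1) (n + 2)) (LinearMap.ker (D₁ (a + 1) (n + 2))))) := by
  have hc2 : ((n + 2 : ℕ) : ℂ) ≠ 0 := Nat.cast_ne_zero.mpr (by omega)
  have hc1 : ((n + 1 : ℕ) : ℂ) ≠ 0 := Nat.cast_ne_zero.mpr (by omega)
  have hca : ((a + 1 : ℕ) : ℂ) ≠ 0 := Nat.cast_ne_zero.mpr (by omega)
  -- canonical-form restatements of the structure identities we use
  have hh₁' : ∀ v : V (a + 2) (n + 2),
      D₁ (a + 1) (n + 2) (h₁ (a + 1) (n + 2) v) + h₁ (a + 2) (n + 2) (D₁ (a + 2) (n + 2) v)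
        = ((n + 2 : ℕ) : ℂ) • v := fun v => hh₁ (a + 1) (n + 2) v
  have hh₁'' : ∀ w : V (a + 2) (n + 1),
      D₁ (a + 1) (n + 1) (h₁ (a + 1) (n + 1) w) + h₁ (a + 2) (n + 1) (D₁ (a + 2) (n + 1) w)
        = ((n + 1 : ℕ) : ℂ) • w := fun w => hh₁ (a + 1) (n + 1) w
  have hanti₁ : ∀ u : V (a + 1) (n + 2),
      D₁ (a + 1) (n + 3) (D₂ (a + 1) (n + 2) u) + D₂ (a + 2) (n + 2) (D₁ (a + 1) (n + 2) u)
        = 0 := fun u => hanti (a + 1) (n + 2) u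
  have hanti₂ : ∀ u : V (a + 1) (n + 1),
      D₁ (a + 1) (n + 2) (D₂ (a + 1) (n + 1) u) + D₂ (a + 2) (n + 1) (D₁ (a + 1) (n + 1) u)
        = 0 := fun u => hanti (a + 1) (n + 1) u
  have hh₂' : ∀ w : V (a + 1) (n + 2),
      D₂ (a + 1) (n + 1) (h₂ (a + 1) (n + 1) w) + h₂ (a + 1) (n + 2) (D₂ (a + 1) (n + 2) w)
        = ((a + 1 : ℕ) : ℂ) • w := fun w => hh₂ (a + 1) (n + 1) w
  have hh₂'' : ∀ x : V (a + 1) (n + 3),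
      D₂ (a + 1) (n + 2) (h₂ (a + 1) (n + 2) x) + h₂ (a + 1) (n + 3) (D₂ (a + 1) (n + 3) x)
        = ((a + 1 : ℕ) : ℂ) • x := fun x => hh₂ (a + 1) (n + 2) x
  have hD₂' : ∀ u : V (a + 1) (n + 1),
      D₂ (a + 1) (n + 2) (D₂ (a + 1) (n + 1) u) = 0 := fun u => hD₂ (a + 1) (n + 1) u
  have hD₁' : ∀ y : V (a + 1) (n + 1),
      D₁ (a + 2) (n + 1) (D₁ (a + 1) (n + 1) y) = 0 := fun y => hD₁ (a + 1) (n + 1) y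
  have hD₁'' : ∀ y : V (a + 1) (n + 2),
      D₁ (a + 2) (n + 2) (D₁ (a + 1) (n + 2) y) = 0 := fun y => hD₁ (a + 1) (n + 2) y
  -- D₁ ∘ h₁ is multiplication by n+2 on D₁-closed elements
  have key₁ : ∀ v : V (a + 2) (n + 2), D₁ (a + 2) (n + 2) v = 0 →
      D₁ (a + 1) (n + 2) (h₁ (a + 1) (n + 2) v) = ((n + 2 : ℕ) : ℂ) • v := by
    intro v hv
    have h := hh₁' v
    rw [hv, map_zero, add_zero] at h
    exact h
  refine ⟨cohEquiv _ _ _ _ ((D₂ (a + 1) (n + 2)) ∘ₗ (h₁ (a + 1) (n + 2))) ?_ ?_ ?_ ?_⟩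
  · -- cocycles to cocycles
    intro x hx
    rw [Submodule.mem_inf, LinearMap.mem_ker, LinearMap.mem_ker] at hx
    obtain ⟨hx1, hx2⟩ := hx
    rw [Submodule.mem_inf, LinearMap.mem_ker, LinearMap.mem_ker]
    simp only [LinearMap.comp_apply]
    constructor
    · have h := hanti₁ (h₁ (a + 1) (n + 2) x)
      rw [key₁ x hx1, map_smul (D₂ (a + 2) (n + 2)), hx2, smul_zero, add_zero] at h
      exact h
    · exact hD₂ (a + 1) (n + 2) (h₁ (a + 1) (n + 2) x)
  · -- coboundaries to coboundaries
    intro x hx hxB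
    rw [Submodule.mem_inf, LinearMap.mem_ker, LinearMap.mem_ker] at hx
    obtain ⟨hx1, hx2⟩ := hx
    obtain ⟨w, hw, hwx⟩ := Submodule.mem_map.mp hxB
    rw [LinearMap.mem_ker] at hw
    simp only [LinearMap.comp_apply]
    have hu₁ : D₁ (a + 1) (n + 1) (h₁ (a + 1) (n + 1) w) = ((n + 1 : ℕ) : ℂ) • w := by
      have h := hh₁'' w
      rw [hw, map_zero, add_zero] at h
      exact h
    have hu₂ : D₁ (a + 1) (n + 2) (D₂ (a + 1) (n + 1) (h₁ (a + 1) (n + 1) w))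
        = -(((n + 1 : ℕ) : ℂ) • x) := by
      have h := hanti₂ (h₁ (a + 1) (n + 1) w)
      rw [hu₁, map_smul (D₂ (a + 2) (n + 1)), hwx] at h
      exact eq_neg_of_add_eq_zero_left h
    have hu : D₁ (a + 1) (n + 2) (((n + 1 : ℕ) : ℂ) • h₁ (a + 1) (n + 2) x
        + ((n + 2 : ℕ) : ℂ) • D₂ (a + 1) (n + 1) (h₁ (a + 1) (n + 1) w)) = 0 := by
      rw [map_add, map_smul (D₁ (a + 1) (n + 2)), map_smul (D₁ (a + 1) (n + 2)),
        key₁ x hx1, hu₂]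
      module
    have hDu : D₂ (a + 1) (n + 2) (((n + 1 : ℕ) : ℂ) • h₁ (a + 1) (n + 2) x
        + ((n + 2 : ℕ) : ℂ) • D₂ (a + 1) (n + 1) (h₁ (a + 1) (n + 1) w))
        = ((n + 1 : ℕ) : ℂ) • D₂ (a + 1) (n + 2) (h₁ (a + 1) (n + 2) x) := by
      rw [map_add, map_smul (D₂ (a + 1) (n + 2)), map_smul (D₂ (a + 1) (n + 2)),
        hD₂' (h₁ (a + 1) (n + 1) w), smul_zero, add_zero]
    refine Submodule.mem_map.mpr ⟨((n + 1 : ℕ) : ℂ)⁻¹ • (((n + 1 : ℕ) : ℂ) •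
      h₁ (a + 1) (n + 2) x
        + ((n + 2 : ℕ) : ℂ) • D₂ (a + 1) (n + 1) (h₁ (a + 1) (n + 1) w)), ?_, ?_⟩
    · rw [LinearMap.mem_ker, map_smul (D₁ (a + 1) (n + 2)), hu, smul_zero]
    · rw [map_smul (D₂ (a + 1) (n + 2)), hDu, smul_smul, inv_mul_cancel₀ hc1, one_smul]
  · -- injectivity on cohomology
    intro x hx hxB
    rw [Submodule.mem_inf, LinearMap.mem_ker, LinearMap.mem_ker] at hx
    obtain ⟨hx1, hx2⟩ := hx
    obtain ⟨z', hz', hz'x⟩ := Submodule.mem_map.mp hxB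
    rw [LinearMap.mem_ker] at hz'
    rw [LinearMap.comp_apply] at hz'x
    obtain ⟨w, hwdef⟩ : ∃ w, w = h₁ (a + 1) (n + 2) x - z' := ⟨_, rfl⟩
    have hw2 : D₂ (a + 1) (n + 2) w = 0 := by
      rw [hwdef, map_sub, hz'x, sub_self]
    have hw1 : D₁ (a + 1) (n + 2) w = ((n + 2 : ℕ) : ℂ) • x := by
      rw [hwdef, map_sub, key₁ x hx1, hz', sub_zero]
    have hy : D₂ (a + 1) (n + 1) (h₂ (a + 1) (n + 1) w) = ((a + 1 : ℕ) : ℂ) • w := by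
      have h := hh₂' w
      rw [hw2, map_zero, add_zero] at h
      exact h
    have hkey : D₂ (a + 2) (n + 1) (D₁ (a + 1) (n + 1) (h₂ (a + 1) (n + 1) w))
        = -((((a + 1 : ℕ) : ℂ) * ((n + 2 : ℕ) : ℂ)) • x) := by
      have h := hanti₂ (h₂ (a + 1) (n + 1) w)
      rw [hy, map_smul (D₁ (a + 1) (n + 2)), hw1, smul_smul] at h
      exact eq_neg_of_add_eq_zero_right h
    refine Submodule.mem_map.mpr
      ⟨-((((a + 1 : ℕ) : ℂ) * ((n + 2 : ℕ) : ℂ))⁻¹ •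
          D₁ (a + 1) (n + 1) (h₂ (a + 1) (n + 1) w)), ?_, ?_⟩
    · rw [LinearMap.mem_ker, map_neg, map_smul (D₁ (a + 2) (n + 1)),
        hD₁' (h₂ (a + 1) (n + 1) w), smul_zero, neg_zero]
    · rw [map_neg, map_smul (D₂ (a + 2) (n + 1)), hkey, smul_neg, neg_neg, smul_smul,
        inv_mul_cancel₀ (mul_ne_zero hca hc2), one_smul]
  · -- surjectivity on cohomology
    intro x hx
    rw [Submodule.mem_inf, LinearMap.mem_ker, LinearMap.mem_ker] at hx
    obtain ⟨hx1, hx2⟩ := hx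
    obtain ⟨y, hydef⟩ : ∃ y, y = h₂ (a + 1) (n + 2) x := ⟨_, rfl⟩
    have hy : D₂ (a + 1) (n + 2) y = ((a + 1 : ℕ) : ℂ) • x := by
      have h := hh₂'' x
      rw [hx2, map_zero, add_zero] at h
      rw [hydef]; exact h
    obtain ⟨v, hvdef⟩ : ∃ v, v = D₁ (a + 1) (n + 2) y := ⟨_, rfl⟩
    have hv1 : D₁ (a + 2) (n + 2) v = 0 := by rw [hvdef]; exact hD₁'' y
    have hv2 : D₂ (a + 2) (n + 2) v = 0 := by
      have h := hanti₁ y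
      rw [hy, map_smul (D₁ (a + 1) (n + 3)), hx1, smul_zero] at h
      rw [hvdef, eq_neg_of_add_eq_zero_right h, neg_zero]
    obtain ⟨c, hcdef⟩ : ∃ c : ℂ, c = (((n + 2 : ℕ) : ℂ) * ((a + 1 : ℕ) : ℂ))⁻¹ := ⟨_, rfl⟩
    have hc : ((n + 2 : ℕ) : ℂ) * c * ((a + 1 : ℕ) : ℂ) = 1 := by
      rw [hcdef,
        show ((n + 2 : ℕ) : ℂ) * (((n + 2 : ℕ) : ℂ) * ((a + 1 : ℕ) : ℂ))⁻¹ * ((a + 1 : ℕ) : ℂ)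
          = (((n + 2 : ℕ) : ℂ) * ((a + 1 : ℕ) : ℂ)) *
            (((n + 2 : ℕ) : ℂ) * ((a + 1 : ℕ) : ℂ))⁻¹ from by ring]
      exact mul_inv_cancel₀ (mul_ne_zero hc2 hca)
    have hcv : D₁ (a + 2) (n + 2) (c • v) = 0 := by
      rw [map_smul (D₁ (a + 2) (n + 2)), hv1, smul_zero]
    refine ⟨c • v, Submodule.mem_inf.mpr ⟨?_, ?_⟩, ?_⟩
    · rw [LinearMap.mem_ker]; exact hcv
    · rw [LinearMap.mem_ker, map_smul (D₂ (a + 2) (n + 2)), hv2, smul_zero]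
    · simp only [LinearMap.comp_apply]
      refine Submodule.mem_map.mpr
        ⟨h₁ (a + 1) (n + 2) (c • v) - (((n + 2 : ℕ) : ℂ) * c) • y, ?_, ?_⟩
      · rw [LinearMap.mem_ker, map_sub, key₁ _ hcv, map_smul (D₁ (a + 1) (n + 2)),
          ← hvdef]
        module
      · rw [map_sub, map_smul (D₂ (a + 1) (n + 2)), hy, smul_smul, hc, one_smul]

/-- Base case: column `1` versus column `0`. -/
lemma last_iso
    (hD₁ : ∀ i j (v : V i j), D₁ (i + 1) j (D₁ i j v) = 0)
    (hD₂ : ∀ i j (v : V i j), D₂ i (j + 1) (D₂ i j v) = 0)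
    (hanti : ∀ i j (v : V i j), D₁ i (j + 1) (D₂ i j v) + D₂ (i + 1) j (D₁ i j v) = 0)
    (hh₁ : ∀ i j (v : V (i + 1) j),
      D₁ i j (h₁ i j v) + h₁ (i + 1) j (D₁ (i + 1) j v) = (j : ℂ) • v)
    (hh₁0 : ∀ j (v : V 0 j), h₁ 0 j (D₁ 0 j v) = (j : ℂ) • v)
    (n : ℕ) :
    Nonempty
      (cohomologyOf (LinearMap.ker (D₁ 1 (n + 2)) ⊓ LinearMap.ker (D₂ 1 (n + 2)))
          (Submodule.map (D₂ 1 (n + 1)) (LinearMap.ker (D₁ 1 (n + 1)))) ≃ₗ[ℂ]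
        cohomologyOf (LinearMap.ker (D₂ 0 (n + 2)))
          (LinearMap.range (D₂ 0 (n + 1)))) := by
  have hc2 : ((n + 2 : ℕ) : ℂ) ≠ 0 := Nat.cast_ne_zero.mpr (by omega)
  have hc1 : ((n + 1 : ℕ) : ℂ) ≠ 0 := Nat.cast_ne_zero.mpr (by omega)
  have hc3 : ((n + 3 : ℕ) : ℂ) ≠ 0 := Nat.cast_ne_zero.mpr (by omega)
  have hinj3 : ∀ w : V 0 (n + 3), D₁ 0 (n + 3) w = 0 → w = 0 := by
    intro w hw
    have h := hh₁0 (n + 3) w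
    rw [hw, map_zero] at h
    exact (smul_eq_zero.mp h.symm).resolve_left hc3
  have hinj2 : ∀ w : V 0 (n + 2), D₁ 0 (n + 2) w = 0 → w = 0 := by
    intro w hw
    have h := hh₁0 (n + 2) w
    rw [hw, map_zero] at h
    exact (smul_eq_zero.mp h.symm).resolve_left hc2
  have hh₁' : ∀ v : V 1 (n + 2),
      D₁ 0 (n + 2) (h₁ 0 (n + 2) v) + h₁ 1 (n + 2) (D₁ 1 (n + 2) v)
        = ((n + 2 : ℕ) : ℂ) • v := fun v => hh₁ 0 (n + 2) v
  have hh₁'' : ∀ w : V 1 (n + 1),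
      D₁ 0 (n + 1) (h₁ 0 (n + 1) w) + h₁ 1 (n + 1) (D₁ 1 (n + 1) w)
        = ((n + 1 : ℕ) : ℂ) • w := fun w => hh₁ 0 (n + 1) w
  have hanti₁ : ∀ u : V 0 (n + 2),
      D₁ 0 (n + 3) (D₂ 0 (n + 2) u) + D₂ 1 (n + 2) (D₁ 0 (n + 2) u) = 0 :=
    fun u => hanti 0 (n + 2) u
  have hanti₂ : ∀ u : V 0 (n + 1),
      D₁ 0 (n + 2) (D₂ 0 (n + 1) u) + D₂ 1 (n + 1) (D₁ 0 (n + 1) u) = 0 :=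
    fun u => hanti 0 (n + 1) u
  have key₁ : ∀ v : V 1 (n + 2), D₁ 1 (n + 2) v = 0 →
      D₁ 0 (n + 2) (h₁ 0 (n + 2) v) = ((n + 2 : ℕ) : ℂ) • v := by
    intro v hv
    have h := hh₁' v
    rw [hv, map_zero, add_zero] at h
    exact h
  refine ⟨cohEquiv _ _ _ _ (h₁ 0 (n + 2)) ?_ ?_ ?_ ?_⟩
  · -- cocycles to cocycles
    intro x hx
    rw [Submodule.mem_inf, LinearMap.mem_ker, LinearMap.mem_ker] at hx
    obtain ⟨hx1, hx2⟩ := hx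
    rw [LinearMap.mem_ker]
    have h := hanti₁ (h₁ 0 (n + 2) x)
    rw [key₁ x hx1, map_smul (D₂ 1 (n + 2)), hx2, smul_zero, add_zero] at h
    exact hinj3 _ h
  · -- coboundaries to coboundaries
    intro x hx hxB
    rw [Submodule.mem_inf, LinearMap.mem_ker, LinearMap.mem_ker] at hx
    obtain ⟨hx1, hx2⟩ := hx
    obtain ⟨w, hw, hwx⟩ := Submodule.mem_map.mp hxB
    rw [LinearMap.mem_ker] at hw
    have hu₁ : D₁ 0 (n + 1) (h₁ 0 (n + 1) w) = ((n + 1 : ℕ) : ℂ) • w := by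
      have h := hh₁'' w
      rw [hw, map_zero, add_zero] at h
      exact h
    have hu₂ : D₁ 0 (n + 2) (D₂ 0 (n + 1) (h₁ 0 (n + 1) w))
        = -(((n + 1 : ℕ) : ℂ) • x) := by
      have h := hanti₂ (h₁ 0 (n + 1) w)
      rw [hu₁, map_smul (D₂ 1 (n + 1)), hwx] at h
      exact eq_neg_of_add_eq_zero_left h
    have hzero : ((n + 1 : ℕ) : ℂ) • h₁ 0 (n + 2) x
        + ((n + 2 : ℕ) : ℂ) • D₂ 0 (n + 1) (h₁ 0 (n + 1) w) = 0 := by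
      apply hinj2
      rw [map_add, map_smul (D₁ 0 (n + 2)), map_smul (D₁ 0 (n + 2)), key₁ x hx1, hu₂]
      module
    have h6 : h₁ 0 (n + 2) x + (((n + 1 : ℕ) : ℂ)⁻¹ * ((n + 2 : ℕ) : ℂ)) •
        D₂ 0 (n + 1) (h₁ 0 (n + 1) w) = 0 := by
      have h7 : ((n + 1 : ℕ) : ℂ)⁻¹ • (((n + 1 : ℕ) : ℂ) • h₁ 0 (n + 2) x
          + ((n + 2 : ℕ) : ℂ) • D₂ 0 (n + 1) (h₁ 0 (n + 1) w))
          = ((n + 1 : ℕ) : ℂ)⁻¹ • (0 : V 0 (n + 2)) := by rw [hzero]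
      rw [smul_zero, smul_add, smul_smul, smul_smul, inv_mul_cancel₀ hc1, one_smul] at h7
      exact h7
    refine LinearMap.mem_range.mpr
      ⟨(-(((n + 1 : ℕ) : ℂ)⁻¹ * ((n + 2 : ℕ) : ℂ))) • h₁ 0 (n + 1) w, ?_⟩
    rw [map_smul (D₂ 0 (n + 1)), neg_smul, eq_comm, eq_neg_iff_add_eq_zero]
    exact h6
  · -- injectivity on cohomology
    intro x hx hxB
    rw [Submodule.mem_inf, LinearMap.mem_ker, LinearMap.mem_ker] at hx
    obtain ⟨hx1, hx2⟩ := hx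
    obtain ⟨y, hy⟩ := LinearMap.mem_range.mp hxB
    have hkey : D₂ 1 (n + 1) (D₁ 0 (n + 1) y) = -(((n + 2 : ℕ) : ℂ) • x) := by
      have h := hanti₂ y
      rw [hy, key₁ x hx1] at h
      exact eq_neg_of_add_eq_zero_right h
    refine Submodule.mem_map.mpr ⟨-(((n + 2 : ℕ) : ℂ)⁻¹ • D₁ 0 (n + 1) y), ?_, ?_⟩
    · rw [LinearMap.mem_ker, map_neg, map_smul (D₁ 1 (n + 1)), hD₁ 0 (n + 1) y,
        smul_zero, neg_zero]
    · rw [map_neg, map_smul (D₂ 1 (n + 1)), hkey, smul_neg, neg_neg, smul_smul,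
        inv_mul_cancel₀ hc2, one_smul]
  · -- surjectivity on cohomology
    intro u hu
    rw [LinearMap.mem_ker] at hu
    have hv1 : D₁ 1 (n + 2) (D₁ 0 (n + 2) u) = 0 := hD₁ 0 (n + 2) u
    have hv2 : D₂ 1 (n + 2) (D₁ 0 (n + 2) u) = 0 := by
      have h := hanti₁ u
      rw [hu, map_zero] at h
      simpa using h
    refine ⟨((n + 2 : ℕ) : ℂ)⁻¹ • D₁ 0 (n + 2) u, Submodule.mem_inf.mpr ⟨?_, ?_⟩, ?_⟩
    · rw [LinearMap.mem_ker, map_smul (D₁ 1 (n + 2)), hv1, smul_zero]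
    · rw [LinearMap.mem_ker, map_smul (D₂ 1 (n + 2)), hv2, smul_zero]
    · have heq : h₁ 0 (n + 2) (((n + 2 : ℕ) : ℂ)⁻¹ • D₁ 0 (n + 2) u) = u := by
        rw [map_smul (h₁ 0 (n + 2)), hh₁0 (n + 2) u, smul_smul,
          inv_mul_cancel₀ hc2, one_smul]
      rw [heq, sub_self]
      exact Submodule.zero_mem _

/-- The full dimension-shift chain, by induction on the column index. -/
lemma main_iso
    (hD₁ : ∀ i j (v : V i j), D₁ (i + 1) j (D₁ i j v) = 0)
    (hD₂ : ∀ i j (v : V i j), D₂ i (j + 1) (D₂ i j v) = 0)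
    (hanti : ∀ i j (v : V i j), D₁ i (j + 1) (D₂ i j v) + D₂ (i + 1) j (D₁ i j v) = 0)
    (hh₁ : ∀ i j (v : V (i + 1) j),
      D₁ i j (h₁ i j v) + h₁ (i + 1) j (D₁ (i + 1) j v) = (j : ℂ) • v)
    (hh₁0 : ∀ j (v : V 0 j), h₁ 0 j (D₁ 0 j v) = (j : ℂ) • v)
    (hh₂ : ∀ i j (v : V i (j + 1)),
      D₂ i j (h₂ i j v) + h₂ i (j + 1) (D₂ i (j + 1) v) = (i : ℂ) • v)
    (k m : ℕ) :
    Nonempty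
      (cohomologyOf (LinearMap.ker (D₁ (k + 1) (m + 2)) ⊓ LinearMap.ker (D₂ (k + 1) (m + 2)))
          (Submodule.map (D₂ (k + 1) (m + 1)) (LinearMap.ker (D₁ (k + 1) (m + 1)))) ≃ₗ[ℂ]
        cohomologyOf (LinearMap.ker (D₂ 0 (k + m + 2)))
          (LinearMap.range (D₂ 0 (k + m + 1)))) := by
  induction k generalizing m with
  | zero =>
    exact coh_cast (m + 1) (0 + m + 1) (by omega)
      (last_iso hD₁ hD₂ hanti hh₁ hh₁0 m)
  | succ k ih =>
    obtain ⟨e₁⟩ := step_iso hD₁ hD₂ hanti hh₁ hh₂ k m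
    obtain ⟨e₂⟩ := ih (m + 1)
    exact coh_cast (k + (m + 1) + 1) (k + 1 + m + 1) (by omega) ⟨e₁.trans e₂⟩

end Aux

/-- Let `V^{i,j}` (`i, j ≥ 0`, zero outside the first quadrant) be an `N = 2`
supersymmetric complex of ℂ-vector spaces: anticommuting square-zero differentials `D₁`
(bidegree `(1,0)`) and `D₂` (bidegree `(0,1)`); homotopies `h₁` (bidegree `(-1,0)`) with
`D₁h₁ + h₁D₁ = j·id` on `V^{i,j}` and `h₂` (bidegree `(0,-1)`) with `D₂h₂ + h₂D₂ = i·id`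
on `V^{i,j}`; and involutions `σ : V^{i,j} → V^{j,i}` with `σσ = id`, `σD₁ = D₂σ`.
Fix `p ≥ 1`.  Let `K^q = ker(D₁ : V^{p,q} → V^{p+1,q})`; then `D₂` restricts to a complex
`(K^•, D₂)`, and for every `n ≥ 0` the `n`-th cohomology of `(K^•, D₂)` is isomorphic, as
a ℂ-vector space, to the `n`-th cohomology of the truncated complex
`T^• = { ker(D₂ : V^{0,p} → V^{0,p+1}) ↪ V^{0,p} → V^{0,p+1} → V^{0,p+2} → ⋯ }`
(the kernel term sitting in degree `0`).  The three conjuncts below treat the cohomology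
degrees `n = 0`, `n = 1` and `n = m + 2`. -/
theorem closed_column_cohomology_iso_truncation (V : ℕ → ℕ → Type*)
    [∀ i j, AddCommGroup (V i j)] [∀ i j, Module ℂ (V i j)]
    (D₁ : ∀ i j, V i j →ₗ[ℂ] V (i + 1) j) (D₂ : ∀ i j, V i j →ₗ[ℂ] V i (j + 1))
    (h₁ : ∀ i j, V (i + 1) j →ₗ[ℂ] V i j) (h₂ : ∀ i j, V i (j + 1) →ₗ[ℂ] V i j)
    (σ : ∀ i j, V i j →ₗ[ℂ] V j i)
    (hD₁ : ∀ i j (v : V i j), D₁ (i + 1) j (D₁ i j v) = 0)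
    (hD₂ : ∀ i j (v : V i j), D₂ i (j + 1) (D₂ i j v) = 0)
    (hanti : ∀ i j (v : V i j), D₁ i (j + 1) (D₂ i j v) + D₂ (i + 1) j (D₁ i j v) = 0)
    (hh₁ : ∀ i j (v : V (i + 1) j),
      D₁ i j (h₁ i j v) + h₁ (i + 1) j (D₁ (i + 1) j v) = (j : ℂ) • v)
    (hh₁0 : ∀ j (v : V 0 j), h₁ 0 j (D₁ 0 j v) = (j : ℂ) • v)
    (hh₂ : ∀ i j (v : V i (j + 1)),
      D₂ i j (h₂ i j v) + h₂ i (j + 1) (D₂ i (j + 1) v) = (i : ℂ) • v)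
    (hh₂0 : ∀ i (v : V i 0), h₂ i 0 (D₂ i 0 v) = (i : ℂ) • v)
    (hσσ : ∀ i j (v : V i j), σ j i (σ i j v) = v)
    (hσD : ∀ i j (v : V i j), σ (i + 1) j (D₁ i j v) = D₂ j i (σ i j v))
    (p : ℕ) (hp : 1 ≤ p) :
    -- `D₂` restricts to maps `K^q → K^{q+1}` :
    (∀ q (v : V p q), D₁ p q v = 0 → D₁ p (q + 1) (D₂ p q v) = 0) ∧
    -- cohomology degree `n = 0` :
    Nonempty
      (cohomologyOf (LinearMap.ker (D₁ p 0) ⊓ LinearMap.ker (D₂ p 0))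
          (⊥ : Submodule ℂ (V p 0)) ≃ₗ[ℂ]
        cohomologyOf (LinearMap.ker (LinearMap.ker (D₂ 0 p)).subtype)
          (⊥ : Submodule ℂ (LinearMap.ker (D₂ 0 p)))) ∧
    -- cohomology degree `n = 1` :
    Nonempty
      (cohomologyOf (LinearMap.ker (D₁ p 1) ⊓ LinearMap.ker (D₂ p 1))
          (Submodule.map (D₂ p 0) (LinearMap.ker (D₁ p 0))) ≃ₗ[ℂ]
        cohomologyOf (LinearMap.ker (D₂ 0 p))
          (LinearMap.range (LinearMap.ker (D₂ 0 p)).subtype)) ∧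
    -- cohomology degrees `n = m + 2` :
    (∀ m : ℕ, Nonempty
      (cohomologyOf (LinearMap.ker (D₁ p (m + 2)) ⊓ LinearMap.ker (D₂ p (m + 2)))
          (Submodule.map (D₂ p (m + 1)) (LinearMap.ker (D₁ p (m + 1)))) ≃ₗ[ℂ]
        cohomologyOf (LinearMap.ker (D₂ 0 (p + m + 1)))
          (LinearMap.range (D₂ 0 (p + m))))) := by
  have hpC : ((p : ℕ) : ℂ) ≠ 0 := Nat.cast_ne_zero.mpr (by omega)
  refine ⟨?_, ?_, ?_, ?_⟩
  · -- restriction claim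
    intro q v hv
    have h := hanti p q v
    rw [hv, map_zero, add_zero] at h
    exact h
  · -- degree 0 : both sides are trivial
    have hL : Subsingleton (cohomologyOf (LinearMap.ker (D₁ p 0) ⊓ LinearMap.ker (D₂ p 0))
        (⊥ : Submodule ℂ (V p 0))) := by
      rw [Submodule.Quotient.subsingleton_iff, eq_top_iff]
      rintro ⟨v, hv⟩ -
      obtain ⟨hv1, hv2⟩ := Submodule.mem_inf.mp hv
      rw [LinearMap.mem_ker] at hv2
      have h := hh₂0 p v
      rw [hv2, map_zero] at h
      have hv0 : v = 0 := (smul_eq_zero.mp h.symm).resolve_left hpC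
      simp only [Submodule.mem_comap, Submodule.subtype_apply, Submodule.mem_bot]
      exact hv0
    have hR : Subsingleton (cohomologyOf
        (LinearMap.ker (LinearMap.ker (D₂ 0 p)).subtype)
        (⊥ : Submodule ℂ (LinearMap.ker (D₂ 0 p)))) := by
      rw [Submodule.Quotient.subsingleton_iff, eq_top_iff]
      rintro ⟨v, hv⟩ -
      rw [LinearMap.mem_ker] at hv
      simp only [Submodule.mem_comap, Submodule.subtype_apply, Submodule.mem_bot]
      exact Subtype.ext hv
    exact ⟨LinearEquiv.ofSubsingleton _ _⟩
  · -- degree 1 : both sides are trivial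
    have hL : Subsingleton (cohomologyOf (LinearMap.ker (D₁ p 1) ⊓ LinearMap.ker (D₂ p 1))
        (Submodule.map (D₂ p 0) (LinearMap.ker (D₁ p 0)))) := by
      rw [Submodule.Quotient.subsingleton_iff, eq_top_iff]
      rintro ⟨v, hv⟩ -
      obtain ⟨hv1, hv2⟩ := Submodule.mem_inf.mp hv
      rw [LinearMap.mem_ker] at hv1 hv2
      have hDh : D₂ p 0 (h₂ p 0 v) = ((p : ℕ) : ℂ) • v := by
        have h : D₂ p 0 (h₂ p 0 v) + h₂ p 1 (D₂ p 1 v) = ((p : ℕ) : ℂ) • v :=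
          hh₂ p 0 v
        rw [hv2, map_zero, add_zero] at h
        exact h
      have hx0 : D₁ p 0 (h₂ p 0 v) = 0 := by
        have h : D₁ p 1 (D₂ p 0 (h₂ p 0 v)) + D₂ (p + 1) 0 (D₁ p 0 (h₂ p 0 v)) = 0 :=
          hanti p 0 (h₂ p 0 v)
        rw [hDh, map_smul, hv1, smul_zero, zero_add] at h
        have h2 := hh₂0 (p + 1) (D₁ p 0 (h₂ p 0 v))
        rw [h, map_zero] at h2
        exact (smul_eq_zero.mp h2.symm).resolve_left
          (Nat.cast_ne_zero.mpr (by omega))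
      simp only [Submodule.mem_comap, Submodule.subtype_apply]
      refine Submodule.mem_map.mpr ⟨((p : ℕ) : ℂ)⁻¹ • h₂ p 0 v, ?_, ?_⟩
      · rw [LinearMap.mem_ker, map_smul, hx0, smul_zero]
      · rw [map_smul, hDh, smul_smul, inv_mul_cancel₀ hpC, one_smul]
    have hR : Subsingleton (cohomologyOf (LinearMap.ker (D₂ 0 p))
        (LinearMap.range (LinearMap.ker (D₂ 0 p)).subtype)) := by
      rw [Submodule.Quotient.subsingleton_iff, eq_top_iff]
      rintro x -
      simp only [Submodule.mem_comap, Submodule.subtype_apply, LinearMap.mem_range]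
      exact ⟨x, rfl⟩
    exact ⟨LinearEquiv.ofSubsingleton _ _⟩
  · -- degrees ≥ 2
    intro m
    obtain ⟨k, rfl⟩ : ∃ k, p = k + 1 := ⟨p - 1, by omega⟩
    exact coh_cast (k + m + 1) (k + 1 + m) (by omega)
      (main_iso hD₁ hD₂ hanti hh₁ hh₁0 hh₂ k m)
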